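/- Assume A = ln(S/K) + rT ≥ 0 and set k = √(2A). Then V₀ = S e^{rT} ( Φ(k) + (1/√(2π)) ∫_k^∞ ( Q(σ̄₀ < σ₁(s)) + Q(σ̄₀ > σ₂(s)) ) e^{-s²/2} ds ) − K ( Φ(0) + (1/√(2π)) ( ∫₀^∞ Q(σ̄₀ < σ₄(s)) e^{-s²/2} ds − ∫_{-∞}^0 Q(σ̄₀ > σ₄(s)) e^{-s²/2} ds ) ). -/

import Mathlib

open MeasureTheory Real Set

/-- The standard normal cumulative distribution function. -/
noncomputable def stdNormalCDF (x : ℝ) : ℝ :=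
  (Real.sqrt (2 * Real.pi))⁻¹ * ∫ u in Set.Iio x, Real.exp (-u ^ 2 / 2)

open Filter
open scoped ENNReal

section Helpers

lemma gauss_integrable : Integrable (fun s : ℝ => Real.exp (-s ^ 2 / 2)) := by
  have h := integrable_exp_neg_mul_sq (show (0:ℝ) < 1/2 by norm_num)
  convert h using 2 with x
  ring_nf

lemma gauss_lint_lt_top {s : Set ℝ} :
    ∫⁻ u in s, ENNReal.ofReal (Real.exp (-u ^ 2 / 2)) < ⊤ := by
  calc ∫⁻ u in s, ENNReal.ofReal (Real.exp (-u ^ 2 / 2))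
      ≤ ∫⁻ u, ENNReal.ofReal (Real.exp (-u ^ 2 / 2)) :=
        setLIntegral_le_lintegral _ _
    _ < ⊤ := gauss_integrable.lintegral_lt_top

lemma toReal_setLIntegral_gauss (s : Set ℝ) :
    (∫⁻ u in s, ENNReal.ofReal (Real.exp (-u ^ 2 / 2))).toReal
      = ∫ u in s, Real.exp (-u ^ 2 / 2) := by
  rw [← ofReal_integral_eq_lintegral_ofReal gauss_integrable.restrict
    (Filter.Eventually.of_forall fun u => (Real.exp_pos _).le),
    ENNReal.toReal_ofReal (integral_nonneg fun u => (Real.exp_pos _).le)]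

lemma toReal_weighted (φ : ℝ → ℝ≥0∞) (hφ : Measurable φ) (hle : ∀ u, φ u ≤ 2)
    (s : Set ℝ) :
    (∫⁻ u in s, φ u * ENNReal.ofReal (Real.exp (-u ^ 2 / 2))).toReal
      = ∫ u in s, (φ u).toReal * Real.exp (-u ^ 2 / 2) := by
  have hfin : ∀ u, φ u ≠ ⊤ := fun u => (lt_of_le_of_lt (hle u) (by norm_num)).ne
  have hptw : ∀ u : ℝ, φ u * ENNReal.ofReal (Real.exp (-u ^ 2 / 2))
      = ENNReal.ofReal ((φ u).toReal * Real.exp (-u ^ 2 / 2)) := by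
    intro u
    rw [ENNReal.ofReal_mul ENNReal.toReal_nonneg, ENNReal.ofReal_toReal (hfin u)]
  have hint : Integrable (fun u => (φ u).toReal * Real.exp (-u ^ 2 / 2))
      (volume.restrict s) := by
    apply Integrable.mono' ((gauss_integrable.const_mul 2).restrict)
    · exact ((hφ.ennreal_toReal).mul (by fun_prop)).aestronglyMeasurable
    · apply Filter.Eventually.of_forall
      intro u
      rw [Real.norm_eq_abs, abs_of_nonneg
        (mul_nonneg ENNReal.toReal_nonneg (Real.exp_pos _).le)]
      have h2 : (φ u).toReal ≤ 2 := by
        have := ENNReal.toReal_mono (by norm_num : (2 : ℝ≥0∞) ≠ ⊤) (hle u)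
        simpa using this
      exact mul_le_mul_of_nonneg_right h2 (Real.exp_pos _).le
  simp_rw [hptw]
  rw [← ofReal_integral_eq_lintegral_ofReal hint
    (Filter.Eventually.of_forall fun u =>
      mul_nonneg ENNReal.toReal_nonneg (Real.exp_pos _).le),
    ENNReal.toReal_ofReal (integral_nonneg fun u =>
      mul_nonneg ENNReal.toReal_nonneg (Real.exp_pos _).le)]

variable {Ω : Type*} [MeasurableSpace Ω] (Q : Measure Ω) [IsProbabilityMeasure Q]

lemma lint_swap_lt (f : Ω → ℝ) (hf : Measurable f) :
    ∫⁻ ω, (∫⁻ u in Iio (f ω), ENNReal.ofReal (Real.exp (-u ^ 2 / 2))) ∂Q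
      = ∫⁻ s, Q {ω | s < f ω} * ENNReal.ofReal (Real.exp (-s ^ 2 / 2)) := by
  have hset : MeasurableSet {p : Ω × ℝ | p.2 < f p.1} :=
    measurableSet_lt measurable_snd (hf.comp measurable_fst)
  set F : Ω → ℝ → ℝ≥0∞ := fun ω s =>
    {p : Ω × ℝ | p.2 < f p.1}.indicator
      (fun p => ENNReal.ofReal (Real.exp (-p.2 ^ 2 / 2))) (ω, s) with hF
  have hFm : Measurable (Function.uncurry F) := by
    apply Measurable.indicator _ hset
    exact ENNReal.measurable_ofReal.comp (by fun_prop)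
  have h1 : ∀ ω, (∫⁻ u in Iio (f ω), ENNReal.ofReal (Real.exp (-u ^ 2 / 2)))
      = ∫⁻ s, F ω s := by
    intro ω
    rw [← lintegral_indicator measurableSet_Iio]
    apply lintegral_congr
    intro s
    by_cases hs : s < f ω <;> simp [hF, Set.indicator, hs]
  have h2 : ∀ s : ℝ, (∫⁻ ω, F ω s ∂Q)
      = Q {ω | s < f ω} * ENNReal.ofReal (Real.exp (-s ^ 2 / 2)) := by
    intro s
    have hms : MeasurableSet {ω | s < f ω} := measurableSet_lt measurable_const hf
    have : ∀ ω, F ω s = {ω | s < f ω}.indicator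
        (fun _ => ENNReal.ofReal (Real.exp (-s ^ 2 / 2))) ω := by
      intro ω
      by_cases hω : s < f ω <;> simp [hF, Set.indicator, hω]
    simp_rw [this]
    rw [lintegral_indicator hms, setLIntegral_const, mul_comm]
  simp_rw [h1]
  rw [lintegral_lintegral_swap hFm.aemeasurable]
  simp_rw [h2]

lemma lint_swap_le (f : Ω → ℝ) (hf : Measurable f) :
    ∫⁻ ω, (∫⁻ u in Iio (f ω), ENNReal.ofReal (Real.exp (-u ^ 2 / 2))) ∂Q
      = ∫⁻ s, Q {ω | s ≤ f ω} * ENNReal.ofReal (Real.exp (-s ^ 2 / 2)) := by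
  have hset : MeasurableSet {p : Ω × ℝ | p.2 ≤ f p.1} :=
    measurableSet_le measurable_snd (hf.comp measurable_fst)
  set F : Ω → ℝ → ℝ≥0∞ := fun ω s =>
    {p : Ω × ℝ | p.2 ≤ f p.1}.indicator
      (fun p => ENNReal.ofReal (Real.exp (-p.2 ^ 2 / 2))) (ω, s) with hF
  have hFm : Measurable (Function.uncurry F) := by
    apply Measurable.indicator _ hset
    exact ENNReal.measurable_ofReal.comp (by fun_prop)
  have h1 : ∀ ω, (∫⁻ u in Iio (f ω), ENNReal.ofReal (Real.exp (-u ^ 2 / 2)))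
      = ∫⁻ s, F ω s := by
    intro ω
    rw [setLIntegral_congr (Iio_ae_eq_Iic (a := f ω)),
      ← lintegral_indicator measurableSet_Iic]
    apply lintegral_congr
    intro s
    by_cases hs : s ≤ f ω <;> simp [hF, Set.indicator, hs]
  have h2 : ∀ s : ℝ, (∫⁻ ω, F ω s ∂Q)
      = Q {ω | s ≤ f ω} * ENNReal.ofReal (Real.exp (-s ^ 2 / 2)) := by
    intro s
    have hms : MeasurableSet {ω | s ≤ f ω} := measurableSet_le measurable_const hf
    have : ∀ ω, F ω s = {ω | s ≤ f ω}.indicator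
        (fun _ => ENNReal.ofReal (Real.exp (-s ^ 2 / 2))) ω := by
      intro ω
      by_cases hω : s ≤ f ω <;> simp [hF, Set.indicator, hω]
    simp_rw [this]
    rw [lintegral_indicator hms, setLIntegral_const, mul_comm]
  simp_rw [h1]
  rw [lintegral_lintegral_swap hFm.aemeasurable]
  simp_rw [h2]

omit [IsProbabilityMeasure Q] in
lemma meas_lt_measurable (f : Ω → ℝ) :
    Measurable (fun s : ℝ => Q {ω | s < f ω}) := by
  apply Antitone.measurable
  intro a b hab
  exact measure_mono (fun ω hω => lt_of_le_of_lt hab hω)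

omit [IsProbabilityMeasure Q] in
lemma meas_le_measurable (f : Ω → ℝ) :
    Measurable (fun s : ℝ => Q {ω | s ≤ f ω}) := by
  apply Antitone.measurable
  intro a b hab
  exact measure_mono (fun ω hω => le_trans hab hω)

lemma ae_le_eq_lt (f : Ω → ℝ) (hf : Measurable f) :
    (fun s : ℝ => Q {ω | s ≤ f ω} * ENNReal.ofReal (Real.exp (-s ^ 2 / 2)))
      =ᵐ[volume]
    (fun s : ℝ => Q {ω | s < f ω} * ENNReal.ofReal (Real.exp (-s ^ 2 / 2))) := by
  set g : ℝ → ℝ≥0∞ := fun s => ENNReal.ofReal (Real.exp (-s ^ 2 / 2)) with hg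
  have hgm : Measurable g := ENNReal.measurable_ofReal.comp (by fun_prop)
  set h₁ : ℝ → ℝ≥0∞ := fun s => Q {ω | s < f ω} * g s with hh₁
  set h₂ : ℝ → ℝ≥0∞ := fun s => Q {ω | s ≤ f ω} * g s with hh₂
  have hm₁ : Measurable h₁ := (meas_lt_measurable Q f).mul hgm
  have hm₂ : Measurable h₂ := (meas_le_measurable Q f).mul hgm
  have hle : h₁ ≤ h₂ := by
    intro s
    have hsub : Q {ω | s < f ω} ≤ Q {ω | s ≤ f ω} :=
      measure_mono (fun ω (hω : s < f ω) => (hω.le : s ≤ f ω))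
    exact mul_le_mul_left hsub _
  have heq : ∫⁻ s, h₂ s = ∫⁻ s, h₁ s := by
    rw [← lint_swap_lt Q f hf, ← lint_swap_le Q f hf]
  have hfin : ∫⁻ s, h₁ s ≠ ⊤ := by
    have : ∫⁻ s, h₁ s ≤ ∫⁻ s, g s := by
      apply lintegral_mono
      intro s
      have h1 : Q {ω | s < f ω} ≤ 1 := prob_le_one
      calc h₁ s ≤ 1 * g s := mul_le_mul_left h1 _
        _ = g s := one_mul _
    exact (lt_of_le_of_lt this gauss_integrable.lintegral_lt_top).ne
  have hsub : ∫⁻ s, (h₂ s - h₁ s) = 0 := by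
    rw [lintegral_sub hm₁ hfin (Filter.Eventually.of_forall hle), heq, tsub_self]
  have := (lintegral_eq_zero_iff (hm₂.sub hm₁)).mp hsub
  filter_upwards [this] with s hs
  have : h₂ s ≤ h₁ s := tsub_eq_zero_iff_le.mp hs
  exact le_antisymm this (hle s)

lemma exp_cdf (f : Ω → ℝ) (hf : Measurable f) :
    ∫ ω, stdNormalCDF (f ω) ∂Q
      = (Real.sqrt (2 * Real.pi))⁻¹
          * (∫⁻ s, Q {ω | s < f ω} * ENNReal.ofReal (Real.exp (-s ^ 2 / 2))).toReal := by
  set L : Ω → ℝ≥0∞ := fun ω => ∫⁻ u in Iio (f ω), ENNReal.ofReal (Real.exp (-u ^ 2 / 2))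
    with hL
  have hLm : Measurable L := by
    have hset : MeasurableSet {p : Ω × ℝ | p.2 < f p.1} :=
      measurableSet_lt measurable_snd (hf.comp measurable_fst)
    have : L = fun ω => ∫⁻ s, ({p : Ω × ℝ | p.2 < f p.1}.indicator
        (fun p => ENNReal.ofReal (Real.exp (-p.2 ^ 2 / 2))) (ω, s)) := by
      funext ω
      show (∫⁻ u in Iio (f ω), ENNReal.ofReal (Real.exp (-u ^ 2 / 2))) = _
      rw [← lintegral_indicator measurableSet_Iio]
      apply lintegral_congr
      intro s
      by_cases hs : s < f ω <;> simp [Set.indicator, hs]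
    rw [this]
    apply Measurable.lintegral_prod_right
    apply Measurable.indicator _ hset
    exact ENNReal.measurable_ofReal.comp (by fun_prop)
  have hLfin : ∀ ω, L ω < ⊤ := fun ω => gauss_lint_lt_top
  have hcdf : ∀ ω, stdNormalCDF (f ω) = (Real.sqrt (2 * Real.pi))⁻¹ * (L ω).toReal := by
    intro ω
    rw [stdNormalCDF, hL]
    congr 1
    rw [← ENNReal.toReal_ofReal (integral_nonneg (fun u => (Real.exp_pos _).le)
      (f := fun u : ℝ => Real.exp (-u ^ 2 / 2)) (μ := volume.restrict (Iio (f ω))))]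
    congr 1
    exact ofReal_integral_eq_lintegral_ofReal gauss_integrable.restrict
      (Filter.Eventually.of_forall (fun u => (Real.exp_pos _).le))
  simp_rw [hcdf]
  rw [integral_const_mul]
  congr 1
  rw [integral_toReal hLm.aemeasurable (Filter.Eventually.of_forall hLfin)]
  rw [lint_swap_lt Q f hf]

end Helpers

section Pointwise
variable {A k T t s x : ℝ}

lemma quad1_low (hT : 0 < T) (ht : t = Real.sqrt T) (hA : 0 ≤ A)
    (hk : k = Real.sqrt (2 * A)) (hx : 0 < x) (hs : s < k) :
    s < (A + x ^ 2 * T / 2) / (x * t) := by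
  have htpos : 0 < t := ht ▸ Real.sqrt_pos.mpr hT
  have ht2 : t ^ 2 = T := by rw [ht]; exact Real.sq_sqrt hT.le
  have hk2 : k ^ 2 = 2 * A := by rw [hk]; exact Real.sq_sqrt (by linarith)
  rw [lt_div_iff₀ (mul_pos hx htpos), ← ht2]
  nlinarith [sq_nonneg (x * t - k), mul_pos hx htpos,
    mul_lt_mul_of_pos_right hs (mul_pos hx htpos)]

lemma quad1_high (hT : 0 < T) (ht : t = Real.sqrt T) (hA : 0 ≤ A)
    (hk : k = Real.sqrt (2 * A)) (hx : 0 < x) (hs : k < s) :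
    (s < (A + x ^ 2 * T / 2) / (x * t)) ↔
      (x < s / t - Real.sqrt (s ^ 2 * T - 2 * T * A) / T ∨
        s / t + Real.sqrt (s ^ 2 * T - 2 * T * A) / T < x) := by
  have htpos : 0 < t := ht ▸ Real.sqrt_pos.mpr hT
  have ht2 : t ^ 2 = T := by rw [ht]; exact Real.sq_sqrt hT.le
  have hk0 : 0 ≤ k := hk ▸ Real.sqrt_nonneg _
  have hk2 : k ^ 2 = 2 * A := by rw [hk]; exact Real.sq_sqrt (by linarith)
  set D := Real.sqrt (s ^ 2 * T - 2 * T * A) with hD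
  have hss : k * k < s * s := mul_self_lt_mul_self hk0 hs
  have hdisc : 0 ≤ s ^ 2 * T - 2 * T * A := by
    nlinarith [mul_pos hT (show (0:ℝ) < s ^ 2 - 2 * A by nlinarith)]
  have hD2 : D ^ 2 = s ^ 2 * T - 2 * T * A := Real.sq_sqrt hdisc
  have hD0 : 0 ≤ D := Real.sqrt_nonneg _
  have h₁ : s / t - D / T = (s * t - D) / T := by
    rw [← ht2]; field_simp
  have h₂ : s / t + D / T = (s * t + D) / T := by
    rw [← ht2]; field_simp
  rw [h₁, h₂, lt_div_iff₀ (mul_pos hx htpos), lt_div_iff₀ hT, div_lt_iff₀ hT]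
  rw [← ht2] at *
  constructor
  · intro hlt
    by_contra hcon
    push_neg at hcon
    obtain ⟨hc1, hc2⟩ := hcon
    nlinarith [mul_nonneg (sub_nonneg.2 hc1) (sub_nonneg.2 hc2),
      mul_lt_mul_of_pos_right hlt (mul_pos htpos htpos)]
  · rintro (hc | hc)
    · nlinarith [mul_pos (sub_pos.2 hc) (by nlinarith : (0:ℝ) < s * t - x * t ^ 2 + D),
        mul_pos htpos htpos]
    · nlinarith [mul_pos (sub_pos.2 hc) (by nlinarith : (0:ℝ) < x * t ^ 2 - s * t + D),
        mul_pos htpos htpos]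

lemma quad2_lt (hT : 0 < T) (ht : t = Real.sqrt T) (hA : 0 ≤ A)
    (hx : 0 < x) :
    (s < (A + x ^ 2 * T / 2) / (x * t) - x * t) ↔
      (x < -s / t + Real.sqrt (s ^ 2 * T + 2 * T * A) / T) := by
  have htpos : 0 < t := ht ▸ Real.sqrt_pos.mpr hT
  have ht2 : t ^ 2 = T := by rw [ht]; exact Real.sq_sqrt hT.le
  set E := Real.sqrt (s ^ 2 * T + 2 * T * A) with hE
  have hdisc : 0 ≤ s ^ 2 * T + 2 * T * A := by nlinarith
  have hE2 : E ^ 2 = s ^ 2 * T + 2 * T * A := Real.sq_sqrt hdisc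
  have hE0 : 0 ≤ E := Real.sqrt_nonneg _
  have h₁ : -s / t + E / T = (E - s * t) / T := by
    rw [← ht2]; field_simp; ring
  rw [h₁, lt_sub_iff_add_lt, lt_div_iff₀ (mul_pos hx htpos), lt_div_iff₀ hT]
  rw [← ht2] at *
  have hEst : 0 ≤ E + s * t := by
    by_contra hcon
    push_neg at hcon
    have h1 : E < -(s * t) := by linarith
    have h2 : E * E < -(s * t) * -(s * t) := mul_self_lt_mul_self hE0 h1
    nlinarith [mul_nonneg hA (mul_pos htpos htpos).le]
  constructor
  · intro hlt
    by_contra hcon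
    push_neg at hcon
    have h1 : E ≤ x * t ^ 2 + s * t := by linarith
    have h2 : E * E ≤ (x * t ^ 2 + s * t) * (x * t ^ 2 + s * t) :=
      mul_self_le_mul_self hE0 h1
    nlinarith [mul_lt_mul_of_pos_right hlt (mul_pos htpos htpos)]
  · intro hc
    have hp1 : 0 < E - (x * t ^ 2 + s * t) := by linarith
    have hp2 : 0 < E + (x * t ^ 2 + s * t) := by
      have : 0 < x * t ^ 2 := mul_pos hx (by positivity)
      linarith
    nlinarith [mul_pos hp1 hp2, mul_pos htpos htpos]

lemma quad2_le (hT : 0 < T) (ht : t = Real.sqrt T) (hA : 0 ≤ A)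
    (hx : 0 < x) :
    (s ≤ (A + x ^ 2 * T / 2) / (x * t) - x * t) ↔
      (x ≤ -s / t + Real.sqrt (s ^ 2 * T + 2 * T * A) / T) := by
  have htpos : 0 < t := ht ▸ Real.sqrt_pos.mpr hT
  have ht2 : t ^ 2 = T := by rw [ht]; exact Real.sq_sqrt hT.le
  set E := Real.sqrt (s ^ 2 * T + 2 * T * A) with hE
  have hdisc : 0 ≤ s ^ 2 * T + 2 * T * A := by nlinarith
  have hE2 : E ^ 2 = s ^ 2 * T + 2 * T * A := Real.sq_sqrt hdisc
  have hE0 : 0 ≤ E := Real.sqrt_nonneg _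
  have h₁ : -s / t + E / T = (E - s * t) / T := by
    rw [← ht2]; field_simp; ring
  rw [h₁, le_sub_iff_add_le, le_div_iff₀ (mul_pos hx htpos), le_div_iff₀ hT]
  rw [← ht2] at *
  have hEst : 0 ≤ E + s * t := by
    by_contra hcon
    push_neg at hcon
    have h1 : E < -(s * t) := by linarith
    have h2 : E * E < -(s * t) * -(s * t) := mul_self_lt_mul_self hE0 h1
    nlinarith [mul_nonneg hA (mul_pos htpos htpos).le]
  constructor
  · intro hle
    by_contra hcon
    push_neg at hcon
    have h1 : E < x * t ^ 2 + s * t := by linarith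
    have h2 : E * E < (x * t ^ 2 + s * t) * (x * t ^ 2 + s * t) :=
      mul_self_lt_mul_self hE0 h1
    nlinarith [mul_le_mul_of_nonneg_right hle (mul_pos htpos htpos).le]
  · intro hc
    have hp1 : 0 ≤ E - (x * t ^ 2 + s * t) := by linarith
    have hp2 : 0 ≤ E + (x * t ^ 2 + s * t) := by
      have : 0 < x * t ^ 2 := mul_pos hx (by positivity)
      linarith
    nlinarith [mul_nonneg hp1 hp2, mul_pos htpos htpos]

end Pointwise

theorem optionPrice_repr_nonneg
    {Ω : Type*} [MeasurableSpace Ω] (Q : Measure Ω) [IsProbabilityMeasure Q]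
    (c : ℝ) (hc : 0 < c) (σ₀ : Ω → ℝ) (hσ₀ : Measurable σ₀)
    (hσ₀c : ∀ᵐ ω ∂Q, c ≤ σ₀ ω)
    (S K T r : ℝ) (hS : 0 < S) (hK : 0 < K) (hT : 0 < T)
    (A : ℝ) (hA : A = Real.log (S / K) + r * T) (hAnonneg : 0 ≤ A)
    (k : ℝ) (hk : k = Real.sqrt (2 * A))
    (d₁ d₂ : Ω → ℝ)
    (hd₁ : d₁ = fun ω =>
      (Real.log (S / K) + (r + σ₀ ω ^ 2 / 2) * T) / (σ₀ ω * Real.sqrt T))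
    (hd₂ : d₂ = fun ω => d₁ ω - σ₀ ω * Real.sqrt T)
    (σ₁ σ₂ σ₃ σ₄ : ℝ → ℝ)
    (hσ₁ : ∀ s, σ₁ s = s / Real.sqrt T - Real.sqrt (s ^ 2 * T - 2 * T * A) / T)
    (hσ₂ : ∀ s, σ₂ s = s / Real.sqrt T + Real.sqrt (s ^ 2 * T - 2 * T * A) / T)
    (hσ₃ : ∀ s, σ₃ s = -s / Real.sqrt T - Real.sqrt (s ^ 2 * T + 2 * T * A) / T)
    (hσ₄ : ∀ s, σ₄ s = -s / Real.sqrt T + Real.sqrt (s ^ 2 * T + 2 * T * A) / T)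
    (V₀ : ℝ)
    (hV₀ : V₀ = S * Real.exp (r * T) * ∫ ω, stdNormalCDF (d₁ ω) ∂Q
      - K * ∫ ω, stdNormalCDF (d₂ ω) ∂Q) :
    V₀ = S * Real.exp (r * T)
          * (stdNormalCDF k
            + (Real.sqrt (2 * Real.pi))⁻¹
                * ∫ s in Set.Ioi k,
                    ((Q {ω | σ₀ ω < σ₁ s}).toReal + (Q {ω | σ₀ ω > σ₂ s}).toReal)
                      * Real.exp (-s ^ 2 / 2))
        - K * (stdNormalCDF 0
            + (Real.sqrt (2 * Real.pi))⁻¹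
                * ((∫ s in Set.Ioi (0 : ℝ),
                      (Q {ω | σ₀ ω < σ₄ s}).toReal * Real.exp (-s ^ 2 / 2))
                  - ∫ s in Set.Iio (0 : ℝ),
                      (Q {ω | σ₀ ω > σ₄ s}).toReal * Real.exp (-s ^ 2 / 2))) := by
  have hd₁m : Measurable d₁ := by rw [hd₁]; fun_prop
  have hd₂m : Measurable d₂ := by
    rw [hd₂]; exact hd₁m.sub (hσ₀.mul measurable_const)
  have hd₁' : ∀ ω, d₁ ω = (A + σ₀ ω ^ 2 * T / 2) / (σ₀ ω * Real.sqrt T) := by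
    intro ω
    simp only [hd₁]
    congr 1
    rw [hA]; ring
  have hd₂' : ∀ ω, d₂ ω
      = (A + σ₀ ω ^ 2 * T / 2) / (σ₀ ω * Real.sqrt T) - σ₀ ω * Real.sqrt T := by
    intro ω
    simp only [hd₂]
    rw [hd₁' ω]
  -- continuity of the root functions
  have hσ₁c : Continuous σ₁ := by
    rw [funext hσ₁]; fun_prop
  have hσ₂c : Continuous σ₂ := by
    rw [funext hσ₂]; fun_prop
  have hσ₄c : Continuous σ₄ := by
    rw [funext hσ₄]; fun_prop
  -- measurability of measure-valued maps
  have hFlo : Measurable (fun x : ℝ => Q {ω | σ₀ ω < x}) :=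
    Monotone.measurable (fun a b hab => measure_mono
      (fun ω (h : σ₀ ω < a) => (lt_of_lt_of_le h hab : σ₀ ω < b)))
  have hFhi : Measurable (fun x : ℝ => Q {ω | σ₀ ω > x}) :=
    Antitone.measurable (fun a b hab => measure_mono
      (fun ω (h : σ₀ ω > b) => (lt_of_le_of_lt hab h : σ₀ ω > a)))
  have hgEm : Measurable (fun s : ℝ => ENNReal.ofReal (Real.exp (-s ^ 2 / 2))) :=
    ENNReal.measurable_ofReal.comp (by fun_prop)
  -- measure computations
  have hQ1 : ∀ s : ℝ, s < k → Q {ω | s < d₁ ω} = 1 := by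
    intro s hs
    have hae : {ω | s < d₁ ω} =ᵐ[Q] (Set.univ : Set Ω) := by
      rw [Filter.eventuallyEq_set]
      filter_upwards [hσ₀c] with ω hω
      simp only [Set.mem_setOf_eq, Set.mem_univ, iff_true, Set.mem_union, eq_iff_iff, true_iff]
      rw [hd₁' ω]
      exact quad1_low hT rfl hAnonneg hk (lt_of_lt_of_le hc hω) hs
    rw [measure_congr hae, measure_univ]
  have hQ2 : ∀ s : ℝ, k < s →
      Q {ω | s < d₁ ω} = Q {ω | σ₀ ω < σ₁ s} + Q {ω | σ₀ ω > σ₂ s} := by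
    intro s hs
    have hae : {ω | s < d₁ ω} =ᵐ[Q] (({ω | σ₀ ω < σ₁ s} ∪ {ω | σ₀ ω > σ₂ s} : Set Ω)) := by
      rw [Filter.eventuallyEq_set]
      filter_upwards [hσ₀c] with ω hω
      simp only [Set.mem_setOf_eq, Set.mem_union, eq_iff_iff]
      rw [hd₁' ω, hσ₁ s, hσ₂ s]
      exact quad1_high hT rfl hAnonneg hk (lt_of_lt_of_le hc hω) hs
    rw [measure_congr hae]
    apply measure_union _ (measurableSet_lt measurable_const hσ₀)
    have h12 : σ₁ s ≤ σ₂ s := by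
      rw [hσ₁ s, hσ₂ s]
      have h0 : 0 ≤ Real.sqrt (s ^ 2 * T - 2 * T * A) / T :=
        div_nonneg (Real.sqrt_nonneg _) hT.le
      linarith
    rw [Set.disjoint_left]
    intro ω h1 h2
    have ha : σ₀ ω < σ₁ s := h1
    have hb : σ₂ s < σ₀ ω := h2
    linarith
  have hQ4lt : ∀ s : ℝ, Q {ω | s < d₂ ω} = Q {ω | σ₀ ω < σ₄ s} := by
    intro s
    apply measure_congr
    rw [Filter.eventuallyEq_set]
    filter_upwards [hσ₀c] with ω hω
    rw [hd₂' ω, hσ₄ s]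
    exact quad2_lt hT rfl hAnonneg (lt_of_lt_of_le hc hω)
  have hQ4le : ∀ s : ℝ, Q {ω | s ≤ d₂ ω} = 1 - Q {ω | σ₀ ω > σ₄ s} := by
    intro s
    have h1 : Q {ω | s ≤ d₂ ω} = Q {ω | σ₀ ω ≤ σ₄ s} := by
      apply measure_congr
      rw [Filter.eventuallyEq_set]
      filter_upwards [hσ₀c] with ω hω
      rw [hd₂' ω, hσ₄ s]
      exact quad2_le hT rfl hAnonneg (lt_of_lt_of_le hc hω)
    have h2 : {ω | σ₀ ω ≤ σ₄ s} = {ω | σ₀ ω > σ₄ s}ᶜ := by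
      ext ω; simp [not_lt]
    rw [h1, h2, prob_compl_eq_one_sub (measurableSet_lt measurable_const hσ₀)]
  -- finiteness helpers
  have hfinW : ∀ (φ : ℝ → ℝ≥0∞), (∀ u, φ u ≤ 2) → ∀ (s : Set ℝ),
      (∫⁻ u in s, φ u * ENNReal.ofReal (Real.exp (-u ^ 2 / 2))) ≠ ⊤ := by
    intro φ hφ s
    apply ne_of_lt
    calc ∫⁻ u in s, φ u * ENNReal.ofReal (Real.exp (-u ^ 2 / 2))
        ≤ ∫⁻ u in s, 2 * ENNReal.ofReal (Real.exp (-u ^ 2 / 2)) :=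
          lintegral_mono fun u => mul_le_mul_left (hφ u) _
      _ = 2 * ∫⁻ u in s, ENNReal.ofReal (Real.exp (-u ^ 2 / 2)) :=
          lintegral_const_mul 2 hgEm
      _ < ⊤ := ENNReal.mul_lt_top (by norm_num) gauss_lint_lt_top
  have hQ12le : ∀ s : ℝ, Q {ω | σ₀ ω < σ₁ s} + Q {ω | σ₀ ω > σ₂ s} ≤ 2 := by
    intro s
    calc Q {ω | σ₀ ω < σ₁ s} + Q {ω | σ₀ ω > σ₂ s} ≤ 1 + 1 :=
        add_le_add prob_le_one prob_le_one
      _ = 2 := one_add_one_eq_two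
  have hQ4lt2 : ∀ u : ℝ, Q {ω | σ₀ ω < σ₄ u} ≤ 2 :=
    fun u => le_trans prob_le_one (by norm_num)
  have hQ4gt2 : ∀ u : ℝ, Q {ω | σ₀ ω > σ₄ u} ≤ 2 :=
    fun u => le_trans prob_le_one (by norm_num)
  have hmeasW₁ : Measurable (fun s => Q {ω | σ₀ ω < σ₁ s} + Q {ω | σ₀ ω > σ₂ s}) :=
    (hFlo.comp hσ₁c.measurable).add (hFhi.comp hσ₂c.measurable)
  have hmeasW₄lt : Measurable (fun s => Q {ω | σ₀ ω < σ₄ s}) :=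
    hFlo.comp hσ₄c.measurable
  have hmeasW₄gt : Measurable (fun s => Q {ω | σ₀ ω > σ₄ s}) :=
    hFhi.comp hσ₄c.measurable
  -- the d₁ expectation
  have hE₁ : ∫ ω, stdNormalCDF (d₁ ω) ∂Q
      = (Real.sqrt (2 * Real.pi))⁻¹
          * ((∫⁻ s in Set.Iio k, ENNReal.ofReal (Real.exp (-s ^ 2 / 2)))
            + ∫⁻ s in Set.Ioi k,
                (Q {ω | σ₀ ω < σ₁ s} + Q {ω | σ₀ ω > σ₂ s})
                  * ENNReal.ofReal (Real.exp (-s ^ 2 / 2))).toReal := by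
    rw [exp_cdf Q d₁ hd₁m]
    congr 2
    rw [← lintegral_add_compl
      (fun s => Q {ω | s < d₁ ω} * ENNReal.ofReal (Real.exp (-s ^ 2 / 2)))
      (measurableSet_Iio (a := k))]
    congr 1
    · exact setLIntegral_congr_fun_ae measurableSet_Iio
        (Filter.Eventually.of_forall fun s hs => by rw [hQ1 s hs, one_mul])
    · rw [compl_Iio, ← setLIntegral_congr (Ioi_ae_eq_Ici (a := k))]
      exact setLIntegral_congr_fun_ae measurableSet_Ioi
        (Filter.Eventually.of_forall fun s hs => by rw [hQ2 s hs])
  have hE₁' : ∫ ω, stdNormalCDF (d₁ ω) ∂Q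
      = stdNormalCDF k + (Real.sqrt (2 * Real.pi))⁻¹
          * ∫ s in Set.Ioi k,
              ((Q {ω | σ₀ ω < σ₁ s}).toReal + (Q {ω | σ₀ ω > σ₂ s}).toReal)
                * Real.exp (-s ^ 2 / 2) := by
    rw [hE₁, ENNReal.toReal_add gauss_lint_lt_top.ne (hfinW _ hQ12le _),
      toReal_setLIntegral_gauss, toReal_weighted _ hmeasW₁ hQ12le, mul_add]
    congr 2
    apply setIntegral_congr_fun measurableSet_Ioi
    intro s _
    show (Q {ω | σ₀ ω < σ₁ s} + Q {ω | σ₀ ω > σ₂ s}).toReal * Real.exp (-s ^ 2 / 2) = _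
    rw [ENNReal.toReal_add (measure_ne_top Q _) (measure_ne_top Q _)]
  -- the d₂ expectation
  have hle42 : (∫⁻ s in Set.Iio (0:ℝ),
        Q {ω | σ₀ ω > σ₄ s} * ENNReal.ofReal (Real.exp (-s ^ 2 / 2)))
      ≤ ∫⁻ s in Set.Iio (0:ℝ), ENNReal.ofReal (Real.exp (-s ^ 2 / 2)) :=
    lintegral_mono fun s =>
      (mul_le_mul_left prob_le_one _).trans_eq (one_mul _)
  have hE₂ : ∫ ω, stdNormalCDF (d₂ ω) ∂Q
      = (Real.sqrt (2 * Real.pi))⁻¹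
          * (((∫⁻ s in Set.Iio (0:ℝ), ENNReal.ofReal (Real.exp (-s ^ 2 / 2)))
              - ∫⁻ s in Set.Iio (0:ℝ),
                  Q {ω | σ₀ ω > σ₄ s} * ENNReal.ofReal (Real.exp (-s ^ 2 / 2)))
            + ∫⁻ s in Set.Ioi (0:ℝ),
                Q {ω | σ₀ ω < σ₄ s} * ENNReal.ofReal (Real.exp (-s ^ 2 / 2))).toReal := by
    rw [exp_cdf Q d₂ hd₂m]
    congr 2
    rw [← lintegral_add_compl
      (fun s => Q {ω | s < d₂ ω} * ENNReal.ofReal (Real.exp (-s ^ 2 / 2)))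
      (measurableSet_Iio (a := (0:ℝ)))]
    congr 1
    · have hres : ∫⁻ s in Set.Iio (0:ℝ),
          Q {ω | s < d₂ ω} * ENNReal.ofReal (Real.exp (-s ^ 2 / 2))
          = ∫⁻ s in Set.Iio (0:ℝ),
              Q {ω | s ≤ d₂ ω} * ENNReal.ofReal (Real.exp (-s ^ 2 / 2)) :=
        lintegral_congr_ae (Filter.EventuallyEq.symm (ae_restrict_of_ae (ae_le_eq_lt Q d₂ hd₂m)))
      rw [hres]
      have hptw : ∀ s : ℝ,
          Q {ω | s ≤ d₂ ω} * ENNReal.ofReal (Real.exp (-s ^ 2 / 2))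
          = ENNReal.ofReal (Real.exp (-s ^ 2 / 2))
            - Q {ω | σ₀ ω > σ₄ s} * ENNReal.ofReal (Real.exp (-s ^ 2 / 2)) := by
        intro s
        rw [hQ4le s, ENNReal.sub_mul (fun _ _ => ENNReal.ofReal_ne_top), one_mul]
      simp_rw [hptw]
      exact lintegral_sub (hmeasW₄gt.mul hgEm) (hfinW _ hQ4gt2 _)
        (Filter.Eventually.of_forall fun s =>
          (mul_le_mul_left prob_le_one _).trans_eq (one_mul _))
    · rw [compl_Iio, ← setLIntegral_congr (Ioi_ae_eq_Ici (a := (0:ℝ)))]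
      exact setLIntegral_congr_fun_ae measurableSet_Ioi
        (Filter.Eventually.of_forall fun s _ => by rw [hQ4lt s])
  have hE₂' : ∫ ω, stdNormalCDF (d₂ ω) ∂Q
      = stdNormalCDF 0 + (Real.sqrt (2 * Real.pi))⁻¹
          * ((∫ s in Set.Ioi (0:ℝ),
                (Q {ω | σ₀ ω < σ₄ s}).toReal * Real.exp (-s ^ 2 / 2))
            - ∫ s in Set.Iio (0:ℝ),
                (Q {ω | σ₀ ω > σ₄ s}).toReal * Real.exp (-s ^ 2 / 2)) := by
    rw [hE₂, ENNReal.toReal_add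
      (lt_of_le_of_lt tsub_le_self gauss_lint_lt_top).ne (hfinW _ hQ4lt2 _),
      ENNReal.toReal_sub_of_le hle42 gauss_lint_lt_top.ne,
      toReal_setLIntegral_gauss, toReal_weighted _ hmeasW₄gt hQ4gt2,
      toReal_weighted _ hmeasW₄lt hQ4lt2]
    have hstd : stdNormalCDF 0
        = (Real.sqrt (2 * Real.pi))⁻¹ * ∫ u in Set.Iio (0:ℝ), Real.exp (-u ^ 2 / 2) := rfl
    rw [hstd]
    ring
  rw [hV₀, hE₁', hE₂']
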